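/- Let A be a real p × n matrix, B a real p × m matrix, b ∈ ℝ^p, c ∈ ℝ^n, and let u₁, …, u_K ∈ ℝ^m be finitely many points with K ≥ 1. Define φ(u) = inf { c ⬝ x : x ∈ ℝ^n, A x ≤ b + B u }. Suppose that for every u in the convex hull of {u₁, …, u_K} the feasible set { x : A x ≤ b + B u } is nonempty and { c ⬝ x : A x ≤ b + B u } is bounded below. Then sup { φ(u) : u ∈ convexHull {u₁, …, u_K} } = max_{1 ≤ k ≤ K} φ(u_k), and there exists an index k₀ such that φ(u_{k₀}) ≥ φ(u) for all u in the convex hull. -/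
import Mathlib


open Matrix

/-- Correctness of the inspection-based oracle: the worst case over the convex
hull of finitely many scenarios of the LP value function `φ` equals the maximum
of `φ` over the scenarios, and is attained at one of them. -/
theorem inspection_oracle_correct
    {p n m K : ℕ} (hK : 1 ≤ K)
    (A : Matrix (Fin p) (Fin n) ℝ) (B : Matrix (Fin p) (Fin m) ℝ)
    (b : Fin p → ℝ) (c : Fin n → ℝ)
    (u : Fin K → (Fin m → ℝ))
    (φ : (Fin m → ℝ) → ℝ)
    (hφ : ∀ v, φ v =
      sInf {y : ℝ | ∃ x : Fin n → ℝ, A.mulVec x ≤ b + B.mulVec v ∧ c ⬝ᵥ x = y})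
    (hne : ∀ v ∈ convexHull ℝ (Set.range u),
      {x : Fin n → ℝ | A.mulVec x ≤ b + B.mulVec v}.Nonempty)
    (hbdd : ∀ v ∈ convexHull ℝ (Set.range u),
      BddBelow {y : ℝ | ∃ x : Fin n → ℝ, A.mulVec x ≤ b + B.mulVec v ∧ c ⬝ᵥ x = y}) :
    sSup (φ '' convexHull ℝ (Set.range u)) =
      Finset.univ.sup' ⟨⟨0, hK⟩, Finset.mem_univ _⟩ (fun k => φ (u k)) ∧
    ∃ k₀ : Fin K, ∀ v ∈ convexHull ℝ (Set.range u), φ v ≤ φ (u k₀) := by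
  set S : (Fin m → ℝ) → Set ℝ :=
    fun v => {y : ℝ | ∃ x : Fin n → ℝ, A.mulVec x ≤ b + B.mulVec v ∧ c ⬝ᵥ x = y} with hS
  have hSne : ∀ v ∈ convexHull ℝ (Set.range u), (S v).Nonempty := by
    intro v hv
    obtain ⟨x, hx⟩ := hne v hv
    exact ⟨c ⬝ᵥ x, x, hx, rfl⟩
  -- convexity of φ on the hull
  have hconv : ConvexOn ℝ (convexHull ℝ (Set.range u)) φ := by
    refine ⟨convex_convexHull ℝ _, ?_⟩
    intro x hx y hy a a' ha ha' hab
    have hmem : a • x + a' • y ∈ convexHull ℝ (Set.range u) :=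
      (convex_convexHull ℝ _) hx hy ha ha' hab
    rw [hφ, hφ, hφ]
    refine le_of_forall_pos_le_add ?_
    intro ε hε
    obtain ⟨y₁, ⟨x₁, hfx₁, rfl⟩, hy₁⟩ := Real.lt_sInf_add_pos (hSne x hx) hε
    obtain ⟨y₂, ⟨x₂, hfx₂, rfl⟩, hy₂⟩ := Real.lt_sInf_add_pos (hSne y hy) hε
    have hfeas : A.mulVec (a • x₁ + a' • x₂) ≤ b + B.mulVec (a • x + a' • y) := by
      rw [mulVec_add, mulVec_smul, mulVec_smul]
      have h1 : a • A.mulVec x₁ + a' • A.mulVec x₂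
          ≤ a • (b + B.mulVec x) + a' • (b + B.mulVec y) :=
        add_le_add (smul_le_smul_of_nonneg_left hfx₁ ha)
          (smul_le_smul_of_nonneg_left hfx₂ ha')
      refine h1.trans_eq ?_
      funext i
      simp only [Pi.add_apply, Pi.smul_apply, smul_eq_mul, mulVec_add, mulVec_smul]
      linear_combination (b i) * hab
    have hle : sInf (S (a • x + a' • y)) ≤ c ⬝ᵥ (a • x₁ + a' • x₂) :=
      csInf_le (hbdd _ hmem) ⟨a • x₁ + a' • x₂, hfeas, rfl⟩
    have hdot : c ⬝ᵥ (a • x₁ + a' • x₂) = a * (c ⬝ᵥ x₁) + a' * (c ⬝ᵥ x₂) := by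
      simp [dotProduct_add, dotProduct_smul, smul_eq_mul]
    calc sInf (S (a • x + a' • y)) ≤ a * (c ⬝ᵥ x₁) + a' * (c ⬝ᵥ x₂) := by rw [← hdot]; exact hle
      _ ≤ a * (sInf (S x) + ε) + a' * (sInf (S y) + ε) :=
        add_le_add (mul_le_mul_of_nonneg_left hy₁.le ha)
          (mul_le_mul_of_nonneg_left hy₂.le ha')
      _ = a * sInf (S x) + a' * sInf (S y) + ε := by linear_combination ε * hab
  -- key bound: φ v ≤ max over scenarios
  have hkey : ∀ v ∈ convexHull ℝ (Set.range u),
      φ v ≤ Finset.univ.sup' ⟨⟨0, hK⟩, Finset.mem_univ _⟩ (fun k => φ (u k)) := by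
    intro v hv
    obtain ⟨y, ⟨k, rfl⟩, hle⟩ := hconv.exists_ge_of_mem_convexHull (subset_convexHull ℝ _) hv
    exact hle.trans (Finset.le_sup' (fun k => φ (u k)) (Finset.mem_univ k))
  obtain ⟨k₀, -, hk₀⟩ := Finset.exists_mem_eq_sup' ⟨⟨0, hK⟩, Finset.mem_univ _⟩
    (fun k => φ (u k))
  have huk₀ : u k₀ ∈ convexHull ℝ (Set.range u) :=
    subset_convexHull ℝ _ ⟨k₀, rfl⟩
  constructor
  · apply le_antisymm
    · refine csSup_le ⟨_, ⟨u k₀, huk₀, rfl⟩⟩ ?_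
      rintro y ⟨v, hv, rfl⟩
      exact hkey v hv
    · rw [hk₀]
      exact le_csSup ⟨_, fun y ⟨v, hv, h⟩ => h ▸ hkey v hv⟩ ⟨u k₀, huk₀, rfl⟩
  · exact ⟨k₀, fun v hv => (hkey v hv).trans_eq hk₀⟩
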